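/- Let Z ⊂ ℙ^1 × ℙ^n (n ≥ 3) be a smooth hypersurface defined by r = g_0 x_0^d + g_1 x_0^{d-1}x_1 + ... + g_d x_1^d with g_i ∈ ℂ[y_0,...,y_n] homogeneous of degree e. Then for each k = 1,...,d, the rational function z_k = (g_k x_0^{d-k} + g_{k+1} x_0^{d-k-1} x_1 + ... + g_d x_1^{d-k}) / x_0^{d-k+1}, which on Z also equals -(g_0 x_0^{k-1} + ... + g_{k-1} x_1^{k-1})/x_1^k, is a global section of O_Z(-1, e), and these sections satisfy x_1 z_{k+1} + g_k - x_0 z_k = 0 on Z for k = 0,...,d with the convention z_0 = z_{d+1} = 0. -/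

import Mathlib

open MvPolynomial

/-- Let `Z ⊂ ℙ¹ × ℙⁿ` (`n ≥ 3`) be a smooth hypersurface defined by
`r = g_0 x₀^d + g_1 x₀^{d-1} x₁ + … + g_d x₁^d` with `g_c` homogeneous of degree `e`
(smoothness is expressed by the Jacobian criterion on the affine cone).  For
`1 ≤ k ≤ d` put `N₁(k) = Σ_{c=k}^{d} g_c x₀^{d-c} x₁^{c-k}` and
`N₂(k) = Σ_{c=0}^{k-1} g_c x₀^{k-1-c} x₁^c`, so that
`z_k = N₁(k)/x₀^{d-k+1} = -N₂(k)/x₁^k` on `Z`.  The identity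
`x₁^k N₁(k) + x₀^{d-k+1} N₂(k) = r` shows that the two rational expressions agree on `Z`,
so `z_k` glues to a global section of `O_Z(-1, e)`; moreover
`x₁ N₁(k+1) + g_k x₀^{d-k} = N₁(k)` holds identically, which is the relation
`x₁ z_{k+1} + g_k - x₀ z_k = 0` on `Z` for `k = 0, …, d` (with `z_0 = z_{d+1} = 0`). -/
theorem stmt_11 (n d e : ℕ) (hn : 3 ≤ n) (hd : 1 ≤ d) (he : 1 ≤ e)
    (g : ℕ → MvPolynomial (Fin (n + 1)) ℂ)
    (hhom : ∀ c ≤ d, g c ∈ homogeneousSubmodule (Fin (n + 1)) ℂ e) :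
    let S := MvPolynomial (Fin 2 ⊕ Fin (n + 1)) ℂ
    let x0 : S := X (Sum.inl 0)
    let x1 : S := X (Sum.inl 1)
    let G : ℕ → S := fun c => rename Sum.inr (g c)
    let r : S := ∑ c ∈ Finset.range (d + 1), G c * x0 ^ (d - c) * x1 ^ c
    let N1 : ℕ → S := fun k => ∑ c ∈ Finset.Icc k d, G c * x0 ^ (d - c) * x1 ^ (c - k)
    let N2 : ℕ → S := fun k => ∑ c ∈ Finset.range k, G c * x0 ^ (k - 1 - c) * x1 ^ c
    -- smoothness of `Z` (Jacobian criterion, not needed for the algebraic identities):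
    (∀ p : (Fin 2 ⊕ Fin (n + 1)) → ℂ, eval p r = 0 →
      ¬(p (Sum.inl 0) = 0 ∧ p (Sum.inl 1) = 0) → ¬(∀ j, p (Sum.inr j) = 0) →
      ∃ v, eval p (pderiv v r) ≠ 0) →
    (∀ k, 1 ≤ k → k ≤ d → x1 ^ k * N1 k + x0 ^ (d - k + 1) * N2 k = r) ∧
    (∀ k, k ≤ d → x1 * N1 (k + 1) + G k * x0 ^ (d - k) = N1 k) := by
  intro S x0 x1 G r N1 N2 _
  have key1 : ∀ k, 1 ≤ k → k ≤ d →
      x1 ^ k * N1 k + x0 ^ (d - k + 1) * N2 k = r := by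
    intro k hk1 hkd
    show x1 ^ k * (∑ c ∈ Finset.Icc k d, G c * x0 ^ (d - c) * x1 ^ (c - k))
        + x0 ^ (d - k + 1) * (∑ c ∈ Finset.range k, G c * x0 ^ (k - 1 - c) * x1 ^ c)
        = ∑ c ∈ Finset.range (d + 1), G c * x0 ^ (d - c) * x1 ^ c
    rw [Finset.mul_sum, Finset.mul_sum, Finset.range_eq_Ico, Finset.range_eq_Ico,
      ← Finset.sum_Ico_consecutive (fun c => G c * x0 ^ (d - c) * x1 ^ c)
        (Nat.zero_le k) (by omega : k ≤ d + 1), add_comm]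
    refine congrArg₂ (· + ·) ?_ ?_
    · rw [show Finset.Ico 0 k = Finset.range k from (Finset.range_eq_Ico k).symm]
      apply Finset.sum_congr rfl
      intro c hc
      simp only [Finset.mem_range] at hc
      calc x0 ^ (d - k + 1) * (G c * x0 ^ (k - 1 - c) * x1 ^ c)
          = G c * (x0 ^ (d - k + 1) * x0 ^ (k - 1 - c)) * x1 ^ c := by ring
        _ = G c * x0 ^ (d - c) * x1 ^ c := by rw [← pow_add, show d - k + 1 + (k - 1 - c) = d - c from by omega]
    · rw [show Finset.Ico k (d + 1) = Finset.Icc k d from (Finset.Ico_add_one_right_eq_Icc k d)]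
      apply Finset.sum_congr rfl
      intro c hc
      simp only [Finset.mem_Icc] at hc
      calc x1 ^ k * (G c * x0 ^ (d - c) * x1 ^ (c - k))
          = G c * x0 ^ (d - c) * (x1 ^ k * x1 ^ (c - k)) := by ring
        _ = G c * x0 ^ (d - c) * x1 ^ c := by rw [← pow_add, show k + (c - k) = c from by omega]
  refine ⟨key1, ?_⟩
  intro k hk
  show x1 * (∑ c ∈ Finset.Icc (k + 1) d, G c * x0 ^ (d - c) * x1 ^ (c - (k + 1)))
      + G k * x0 ^ (d - k) = ∑ c ∈ Finset.Icc k d, G c * x0 ^ (d - c) * x1 ^ (c - k)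
  have hins : Finset.Icc k d = insert k (Finset.Icc (k + 1) d) := by
    ext c; simp only [Finset.mem_Icc, Finset.mem_insert]; omega
  rw [hins, Finset.sum_insert (by simp), Finset.mul_sum]
  simp only [Nat.sub_self, pow_zero, mul_one]
  rw [add_comm]
  congr 1
  apply Finset.sum_congr rfl
  intro c hc
  simp only [Finset.mem_Icc] at hc
  calc x1 * (G c * x0 ^ (d - c) * x1 ^ (c - (k + 1)))
      = G c * x0 ^ (d - c) * (x1 ^ 1 * x1 ^ (c - (k + 1))) := by ring
    _ = G c * x0 ^ (d - c) * x1 ^ (c - k) := by rw [← pow_add, show 1 + (c - (k + 1)) = c - k from by omega]
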